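/- For b ≥ 5 and any a with 2 ≤ a ≤ b-2 and gcd(a,b) = 1, one has (b²-1)/8 ≤ inv(a,b) ≤ (3b² - 12b + 9)/8. -/

import Mathlib

/-- The sawtooth function ((x)): 0 if x is an integer, else x - ⌊x⌋ - 1/2. -/
def sawtooth (x : ℚ) : ℚ := if x.den = 1 then 0 else x - ⌊x⌋ - 1/2

/-- The Dedekind sum s(a,b) = ∑_{i=1}^{b-1} (i/b)·((a·i/b)). -/
def dedekindSum (a b : ℕ) : ℚ :=
  ∑ i ∈ Finset.Icc 1 (b - 1), (i : ℚ) / (b : ℚ) * sawtooth ((a * i : ℕ) / (b : ℚ))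

/-- Representative of a·x mod b in {1, ..., b}. -/
def modRep (a b x : ℕ) : ℕ := if a * x % b = 0 then b else a * x % b

/-- inv(a,b): number of pairs 1 ≤ i < j ≤ b with a·i mod b > a·j mod b
(representatives in {1,...,b}). -/
def invNum (a b : ℕ) : ℕ :=
  ((Finset.Icc 1 b ×ˢ Finset.Icc 1 b).filter
    (fun p => p.1 < p.2 ∧ modRep a b p.2 < modRep a b p.1)).card

open Finset

lemma sumZ_id (n : ℕ) : (∑ u ∈ range n, (u:ℤ)) * 2 = n * (n-1) := by
  induction n with
  | zero => simp
  | succ m ih => rw [Finset.sum_range_succ]; push_cast; push_cast at ih; nlinarith [ih]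

lemma sumZ_sq (n : ℕ) : (∑ u ∈ range n, (u:ℤ)^2) * 6 = n * (n-1) * (2*n-1) := by
  induction n with
  | zero => simp
  | succ m ih => rw [Finset.sum_range_succ]; push_cast; push_cast at ih; nlinarith [ih]

lemma sum_split (a b : ℕ) (f : ℕ → ℤ) :
    ∑ u ∈ range (a*b), f u = ∑ m ∈ range b, ∑ s ∈ range a, f (a*m+s) := by
  induction b with
  | zero => simp
  | succ c ih =>
      rw [Nat.mul_succ, Finset.sum_range_add, ih, Finset.sum_range_succ]

lemma mod_split (a m s : ℕ) (hs : s < a) : (a*m+s) % a = s := by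
  rw [Nat.add_comm, Nat.add_mul_mod_self_left, Nat.mod_eq_of_lt hs]

lemma sum_mod (a b : ℕ) :
    2 * ∑ u ∈ range (a*b), ((u % a : ℕ):ℤ) = (b:ℤ)*(a*((a:ℤ)-1)) := by
  rw [sum_split]
  have e1 : ∀ m ∈ range b, ∑ s ∈ range a, (((a*m+s) % a : ℕ):ℤ) = ∑ s ∈ range a, (s:ℤ) := by
    intro m _
    apply Finset.sum_congr rfl; intro s hs
    rw [mod_split a m s (mem_range.1 hs)]
  rw [Finset.sum_congr rfl e1, Finset.sum_const, Finset.card_range, nsmul_eq_mul]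
  have g1 := sumZ_id a
  linear_combination (b:ℤ) * g1

lemma sum_mul_mod (a b : ℕ) :
    12 * ∑ u ∈ range (a*b), (u:ℤ) * ((u % a : ℕ):ℤ)
    = 3*(a:ℤ)^2*b*((a:ℤ)-1)*((b:ℤ)-1) + 2*(a:ℤ)*b*((a:ℤ)-1)*(2*(a:ℤ)-1) := by
  rw [sum_split]
  have e1 : ∀ m ∈ range b, ∑ s ∈ range a, ((a*m+s:ℕ):ℤ) * (((a*m+s) % a : ℕ):ℤ)
      = (a:ℤ)*m*(∑ s ∈ range a, (s:ℤ)) + (∑ s ∈ range a, (s:ℤ)^2) := by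
    intro m _
    rw [Finset.mul_sum, ← Finset.sum_add_distrib]
    apply Finset.sum_congr rfl; intro s hs
    rw [mod_split a m s (mem_range.1 hs)]; push_cast; ring
  rw [Finset.sum_congr rfl e1, Finset.sum_add_distrib, Finset.sum_const, Finset.card_range,
    nsmul_eq_mul]
  have e2 : ∑ m ∈ range b, (a:ℤ)*m*(∑ s ∈ range a, (s:ℤ))
      = (a:ℤ) * (∑ m ∈ range b, (m:ℤ)) * (∑ s ∈ range a, (s:ℤ)) := by
    rw [← Finset.sum_mul, ← Finset.mul_sum]
  rw [e2]
  set Sa := ∑ s ∈ range a, (s:ℤ) with hSa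
  set Sb := ∑ m ∈ range b, (m:ℤ) with hSb
  set Qa := ∑ s ∈ range a, (s:ℤ)^2 with hQa
  have g1 := sumZ_id a
  have g2 := sumZ_id b
  have g3 := sumZ_sq a
  linear_combination 6*(a:ℤ)*Sb*g1 + 3*(a:ℤ)^2*((a:ℤ)-1)*g2 + 2*(b:ℤ)*g3

lemma sum_crt (a b : ℕ) (h : Nat.Coprime a b) (ha : a ≠ 0) (hb : b ≠ 0) :
    ∑ u ∈ range (a*b), ((u % a : ℕ):ℤ) * ((u % b : ℕ):ℤ)
      = (∑ s ∈ range a, (s:ℤ)) * (∑ t ∈ range b, (t:ℤ)) := by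
  rw [Finset.sum_mul_sum, ← Finset.sum_product']
  apply Finset.sum_nbij' (i := fun u => (u % a, u % b))
    (j := fun p => (Nat.chineseRemainder h p.1 p.2 : ℕ))
  · intro u hu
    simp only [Finset.mem_product, Finset.mem_range]
    exact ⟨Nat.mod_lt _ (Nat.pos_of_ne_zero ha), Nat.mod_lt _ (Nat.pos_of_ne_zero hb)⟩
  · intro p hp
    simp only [Finset.mem_range]
    exact Nat.chineseRemainder_lt_mul h p.1 p.2 ha hb
  · intro u hu
    simp only [Finset.mem_range] at hu
    obtain ⟨hk1, hk2⟩ := (Nat.chineseRemainder h (u % a) (u % b)).2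
    have h1 : (Nat.chineseRemainder h (u % a) (u % b) : ℕ) ≡ u [MOD a] := by
      calc _ ≡ u % a [MOD a] := hk1
        _ ≡ u [MOD a] := (Nat.mod_modEq u a)
    have h2 : (Nat.chineseRemainder h (u % a) (u % b) : ℕ) ≡ u [MOD b] := by
      calc _ ≡ u % b [MOD b] := hk2
        _ ≡ u [MOD b] := (Nat.mod_modEq u b)
    have := (Nat.modEq_and_modEq_iff_modEq_mul h).1 ⟨h1, h2⟩
    have hlt := Nat.chineseRemainder_lt_mul h (u % a) (u % b) ha hb
    exact (Nat.ModEq.eq_of_lt_of_lt this hlt hu)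
  · intro p hp
    simp only [Finset.mem_product, Finset.mem_range] at hp
    obtain ⟨hk1, hk2⟩ := (Nat.chineseRemainder h p.1 p.2).2
    have e1 : (Nat.chineseRemainder h p.1 p.2 : ℕ) % a = p.1 := by
      rw [Nat.ModEq] at hk1; rw [hk1, Nat.mod_eq_of_lt hp.1]
    have e2 : (Nat.chineseRemainder h p.1 p.2 : ℕ) % b = p.2 := by
      rw [Nat.ModEq] at hk2; rw [hk2, Nat.mod_eq_of_lt hp.2]
    simp [e1, e2]
  · intro u hu; rfl

lemma usum_eval (a b : ℕ) (h : Nat.Coprime a b) (ha : 1 ≤ a) (hb : 1 ≤ b) :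
    12 * ((a:ℤ)*b) * (∑ u ∈ range (a*b), ((b-1-u/a : ℕ) : ℤ) * ((a-1-u/b : ℕ):ℤ))
      = (a:ℤ)*b*(((a:ℤ)-1)*((b:ℤ)-1)*(4*(a:ℤ)*b+(a:ℤ)+(b:ℤ)+1)) := by
  have key : ∀ u ∈ range (a*b), ((a:ℤ)*b) * (((b-1-u/a : ℕ):ℤ) * ((a-1-u/b : ℕ):ℤ))
      = ((a:ℤ)*((b:ℤ)-1) - u + ((u%a : ℕ):ℤ)) * ((b:ℤ)*((a:ℤ)-1) - u + ((u%b:ℕ):ℤ)) := by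
    intro u hu
    have hu' := mem_range.1 hu
    have h1 : u/a ≤ b-1 := by
      have : u/a < b := (Nat.div_lt_iff_lt_mul (by omega)).2 (lt_of_lt_of_eq hu' (Nat.mul_comm a b))
      omega
    have h2 : u/b ≤ a-1 := by
      have : u/b < a := (Nat.div_lt_iff_lt_mul (by omega)).2 hu'
      omega
    have e1 : ((b-1-u/a : ℕ):ℤ) = (b:ℤ) - 1 - ((u/a : ℕ):ℤ) := by
      rw [Nat.cast_sub h1, Nat.cast_sub hb]; norm_num
    have e2 : ((a-1-u/b : ℕ):ℤ) = (a:ℤ) - 1 - ((u/b : ℕ):ℤ) := by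
      rw [Nat.cast_sub h2, Nat.cast_sub ha]; norm_num
    have r1 : ((u%a:ℕ):ℤ) = (u:ℤ) - (a:ℤ)*((u/a:ℕ):ℤ) := by
      have h0 := congrArg (Nat.cast : ℕ → ℤ) (Nat.div_add_mod u a)
      rw [Nat.cast_add, Nat.cast_mul] at h0; linarith
    have r2 : ((u%b:ℕ):ℤ) = (u:ℤ) - (b:ℤ)*((u/b:ℕ):ℤ) := by
      have h0 := congrArg (Nat.cast : ℕ → ℤ) (Nat.div_add_mod u b)
      rw [Nat.cast_add, Nat.cast_mul] at h0; linarith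
    rw [e1, e2, r1, r2]; ring
  have step2 : ((a:ℤ)*b) * (∑ u ∈ range (a*b), ((b-1-u/a : ℕ) : ℤ) * ((a-1-u/b : ℕ):ℤ))
      = ∑ u ∈ range (a*b), ((a:ℤ)*((b:ℤ)-1) - u + ((u%a : ℕ):ℤ)) * ((b:ℤ)*((a:ℤ)-1) - u + ((u%b:ℕ):ℤ)) := by
    rw [Finset.mul_sum]; exact Finset.sum_congr rfl key
  have pointwise : ∀ u ∈ range (a*b),
      ((a:ℤ)*((b:ℤ)-1) - u + ((u%a : ℕ):ℤ)) * ((b:ℤ)*((a:ℤ)-1) - u + ((u%b:ℕ):ℤ))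
      = ((a:ℤ)*((b:ℤ)-1))*((b:ℤ)*((a:ℤ)-1))
        - ((a:ℤ)*((b:ℤ)-1) + (b:ℤ)*((a:ℤ)-1))*(u:ℤ) + (u:ℤ)^2
        + ((a:ℤ)*((b:ℤ)-1))*((u%b:ℕ):ℤ) + ((b:ℤ)*((a:ℤ)-1))*((u%a:ℕ):ℤ)
        - (u:ℤ)*((u%b:ℕ):ℤ) - (u:ℤ)*((u%a:ℕ):ℤ) + ((u%a:ℕ):ℤ)*((u%b:ℕ):ℤ) := by
    intro u _; ring
  have expand : ∑ u ∈ range (a*b), ((a:ℤ)*((b:ℤ)-1) - u + ((u%a : ℕ):ℤ)) * ((b:ℤ)*((a:ℤ)-1) - u + ((u%b:ℕ):ℤ))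
      = ((a:ℤ)*(b:ℤ)) * (((a:ℤ)*((b:ℤ)-1))*((b:ℤ)*((a:ℤ)-1)))
        - ((a:ℤ)*((b:ℤ)-1) + (b:ℤ)*((a:ℤ)-1)) * (∑ u ∈ range (a*b), (u:ℤ))
        + (∑ u ∈ range (a*b), (u:ℤ)^2)
        + ((a:ℤ)*((b:ℤ)-1)) * (∑ u ∈ range (a*b), ((u%b:ℕ):ℤ))
        + ((b:ℤ)*((a:ℤ)-1)) * (∑ u ∈ range (a*b), ((u%a:ℕ):ℤ))
        - (∑ u ∈ range (a*b), (u:ℤ)*((u%b:ℕ):ℤ))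
        - (∑ u ∈ range (a*b), (u:ℤ)*((u%a:ℕ):ℤ))
        + (∑ u ∈ range (a*b), ((u%a:ℕ):ℤ)*((u%b:ℕ):ℤ)) := by
    rw [Finset.sum_congr rfl pointwise]
    simp only [Finset.sum_add_distrib, Finset.sum_sub_distrib, ← Finset.mul_sum,
      Finset.sum_const, Finset.card_range, nsmul_eq_mul]
    push_cast
    ring
  rw [mul_assoc, step2, expand]
  have h1 := sumZ_id (a*b)
  have h2 := sumZ_sq (a*b)
  have h3 := sum_mod a b
  have h4 := sum_mod b a
  rw [Nat.mul_comm b a] at h4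
  have h5 := sum_mul_mod a b
  have h6 := sum_mul_mod b a
  rw [Nat.mul_comm b a] at h6
  have h7 := sum_crt a b h (by omega) (by omega)
  have ha' := sumZ_id a
  have hb' := sumZ_id b
  push_cast at h1 h2
  linear_combination (-6*((a:ℤ)*((b:ℤ)-1) + (b:ℤ)*((a:ℤ)-1)))*h1 + 2*h2
    + 6*((b:ℤ)*((a:ℤ)-1))*h3 + 6*((a:ℤ)*((b:ℤ)-1))*h4 - h5 - h6 + 12*h7
    + 6*(∑ t ∈ range b, (t:ℤ))*ha' + 3*(a:ℤ)*((a:ℤ)-1)*hb'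

def DDn (a b : ℕ) : ℕ := ∑ i ∈ Finset.Icc 1 (b-1), i * (a*i/b)

def EEn (a b : ℕ) : ℕ := ∑ i ∈ Finset.Icc 1 (b-1), (a*i/b)

lemma mod_ne_zero {a b x : ℕ} (h : Nat.Coprime a b) (hx : 1 ≤ x) (hx2 : x ≤ b-1) :
    a*x % b ≠ 0 := by
  intro h0
  have hdvd : b ∣ a * x := Nat.dvd_of_mod_eq_zero h0
  have : b ∣ x := (Nat.Coprime.dvd_of_dvd_mul_left (h.symm)) hdvd
  have := Nat.le_of_dvd (by omega) this
  omega

lemma div_le' {a b i : ℕ} (ha : 1 ≤ a) (hb : 1 ≤ b) (hi : i ≤ b-1) : a*i/b ≤ a-1 := by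
  have h2 : a*(b-1) < a*b := Nat.mul_lt_mul_of_pos_left (show b-1 < b by omega) (show 0 < a by omega)
  have : a*i/b < a := (Nat.div_lt_iff_lt_mul (by omega)).2 (by
    have := Nat.mul_le_mul_left a hi; omega)
  omega

lemma filter_eq {a b : ℕ} (h : Nat.Coprime a b) (ha : 1 ≤ a) (hb : 1 ≤ b)
    {i : ℕ} (hi1 : 1 ≤ i) (hi2 : i ≤ b-1) :
    (Finset.Icc 1 (a-1)).filter (fun j => b*j < a*i) = Finset.Icc 1 (a*i/b) := by
  ext j
  simp only [Finset.mem_filter, Finset.mem_Icc]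
  constructor
  · rintro ⟨⟨hj1, hj2⟩, hlt⟩
    exact ⟨hj1, (Nat.le_div_iff_mul_le (by omega)).2 (by rw [Nat.mul_comm]; omega)⟩
  · rintro ⟨hj1, hj2⟩
    have hle : j * b ≤ a * i := (Nat.le_div_iff_mul_le (by omega)).1 hj2
    rw [Nat.mul_comm] at hle
    have hne : b * j ≠ a * i := by
      intro he
      have : a * i % b = 0 := by rw [← he, Nat.mul_mod_right]
      exact mod_ne_zero h hi1 hi2 this
    have hj3 : j ≤ a - 1 := le_trans hj2 (div_le' ha hb hi2)
    exact ⟨⟨hj1, hj3⟩, by omega⟩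

lemma halfsum {a b : ℕ} (h : Nat.Coprime a b) (ha : 1 ≤ a) (hb : 1 ≤ b) :
    a * DDn a b = ∑ i ∈ Finset.Icc 1 (b-1), ∑ j ∈ Finset.Icc 1 (a-1),
      (if b*j < a*i then a*i else 0) := by
  rw [DDn, Finset.mul_sum]
  apply Finset.sum_congr rfl
  intro i hi
  rw [Finset.mem_Icc] at hi
  rw [← Finset.sum_filter, filter_eq h ha hb hi.1 hi.2, Finset.sum_const, Nat.card_Icc,
    smul_eq_mul, Nat.add_sub_cancel]
  ring

lemma maxsum {a b : ℕ} (h : Nat.Coprime a b) (ha : 1 ≤ a) (hb : 1 ≤ b) :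
    a * DDn a b + b * DDn b a
      = ∑ i ∈ Finset.Icc 1 (b-1), ∑ j ∈ Finset.Icc 1 (a-1), max (a*i) (b*j) := by
  rw [halfsum h ha hb, halfsum h.symm hb ha]
  rw [show (∑ j ∈ Finset.Icc 1 (a-1), ∑ i ∈ Finset.Icc 1 (b-1), if a*i < b*j then b*j else 0)
      = ∑ i ∈ Finset.Icc 1 (b-1), ∑ j ∈ Finset.Icc 1 (a-1), (if a*i < b*j then b*j else 0)
    from Finset.sum_comm]
  rw [← Finset.sum_add_distrib]
  apply Finset.sum_congr rfl
  intro i hi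
  rw [← Finset.sum_add_distrib]
  apply Finset.sum_congr rfl
  intro j hj
  rw [Finset.mem_Icc] at hi hj
  have hne : a * i ≠ b * j := by
    intro he
    have : a * i % b = 0 := by rw [he, Nat.mul_mod_right]
    exact mod_ne_zero h hi.1 hi.2 this
  rcases lt_trichotomy (a*i) (b*j) with hc | hc | hc
  · rw [if_neg (by omega), if_pos (by rw [Nat.mul_comm a i, Nat.mul_comm b j] at hc ⊢; omega),
      max_eq_right (le_of_lt hc)]
    omega
  · exact absurd hc hne
  · rw [if_pos hc, if_neg (by rw [Nat.mul_comm a i, Nat.mul_comm b j] at hc ⊢; omega),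
      max_eq_left (le_of_lt hc)]
    omega

lemma count_lt {a b u : ℕ} (ha : 1 ≤ a) (hu : u < a*b) :
    ((Finset.Icc 1 (b-1)).filter (fun i => u < a*i)).card = b-1-u/a := by
  have hset : (Finset.Icc 1 (b-1)).filter (fun i => u < a*i) = Finset.Icc (u/a+1) (b-1) := by
    ext i
    simp only [Finset.mem_filter, Finset.mem_Icc]
    have hd : u/a < i ↔ u < i*a := Nat.div_lt_iff_lt_mul (by omega)
    rw [Nat.mul_comm i a] at hd
    constructor
    · rintro ⟨⟨h1,h2⟩, h3⟩
      exact ⟨hd.2 h3, h2⟩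
    · rintro ⟨h1, h2⟩
      have h3 : u/a < i := h1
      exact ⟨⟨Nat.lt_of_le_of_lt (Nat.zero_le _) h3, h2⟩, hd.1 h3⟩
  have hb1 : u/a < b := (Nat.div_lt_iff_lt_mul (by omega)).2 (by rw [Nat.mul_comm]; exact hu)
  rw [hset, Nat.card_Icc]
  generalize u/a = k at *
  omega

lemma minsum {a b : ℕ} (ha : 1 ≤ a) (hb : 1 ≤ b) :
    ∑ i ∈ Finset.Icc 1 (b-1), ∑ j ∈ Finset.Icc 1 (a-1), min (a*i) (b*j)
      = ∑ u ∈ range (a*b), (b-1-u/a)*(a-1-u/b) := by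
  have step1 : ∀ i ∈ Finset.Icc 1 (b-1), ∀ j ∈ Finset.Icc 1 (a-1),
      min (a*i) (b*j) = ∑ u ∈ range (a*b), (if u < a*i then 1 else 0) * (if u < b*j then 1 else 0) := by
    intro i hi j hj
    rw [Finset.mem_Icc] at hi hj
    have hai : a*i ≤ a*b := Nat.mul_le_mul_left a (by omega)
    have e : ∀ u ∈ range (a*b), (if u < a*i then 1 else 0) * (if u < b*j then 1 else 0)
        = if u < min (a*i) (b*j) then 1 else 0 := by
      intro u _
      rcases lt_or_ge u (a*i) with h1 | h1 <;> rcases lt_or_ge u (b*j) with h2 | h2 <;>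
        simp only [if_pos, if_neg, not_lt.2, Nat.lt_min, h1, h2] <;> simp <;> omega
    rw [Finset.sum_congr rfl e, ← Finset.card_filter]
    have hfil : (range (a*b)).filter (fun u => u < min (a*i) (b*j)) = range (min (a*i) (b*j)) := by
      ext u
      simp only [Finset.mem_filter, Finset.mem_range]
      constructor
      · rintro ⟨_, h⟩; exact h
      · intro h; exact ⟨by have := min_le_left (a*i) (b*j); omega, h⟩
    rw [hfil, Finset.card_range]
  calc ∑ i ∈ Finset.Icc 1 (b-1), ∑ j ∈ Finset.Icc 1 (a-1), min (a*i) (b*j)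
      = ∑ i ∈ Finset.Icc 1 (b-1), ∑ j ∈ Finset.Icc 1 (a-1),
          ∑ u ∈ range (a*b), (if u < a*i then 1 else 0) * (if u < b*j then 1 else 0) := by
        apply Finset.sum_congr rfl; intro i hi; apply Finset.sum_congr rfl; intro j hj
        exact step1 i hi j hj
    _ = ∑ i ∈ Finset.Icc 1 (b-1), ∑ u ∈ range (a*b), ∑ j ∈ Finset.Icc 1 (a-1),
          (if u < a*i then 1 else 0) * (if u < b*j then 1 else 0) := by
        apply Finset.sum_congr rfl; intro i _; exact Finset.sum_comm
    _ = ∑ u ∈ range (a*b), ∑ i ∈ Finset.Icc 1 (b-1), ∑ j ∈ Finset.Icc 1 (a-1),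
          (if u < a*i then 1 else 0) * (if u < b*j then 1 else 0) := Finset.sum_comm
    _ = ∑ u ∈ range (a*b), (b-1-u/a)*(a-1-u/b) := by
        apply Finset.sum_congr rfl; intro u hu
        rw [Finset.mem_range] at hu
        have e2 : ∀ i ∈ Finset.Icc 1 (b-1), ∑ j ∈ Finset.Icc 1 (a-1),
            (if u < a*i then 1 else 0) * (if u < b*j then 1 else 0)
            = (if u < a*i then 1 else 0) * (a-1-u/b) := by
          intro i _
          rw [← Finset.mul_sum]
          congr 1
          rw [← Finset.card_filter]
          exact count_lt hb (by rw [Nat.mul_comm]; exact hu)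
        rw [Finset.sum_congr rfl e2, ← Finset.sum_mul]
        congr 1
        rw [← Finset.card_filter]
        exact count_lt ha hu

lemma gaussIcc (n : ℕ) : (∑ i ∈ Finset.Icc 1 n, (i:ℤ)) * 2 = n*(n+1) := by
  induction n with
  | zero => simp
  | succ m ih =>
      rw [Finset.sum_Icc_succ_top (by omega)]
      push_cast
      push_cast at ih
      nlinarith [ih]

lemma key {a b : ℕ} (h : Nat.Coprime a b) (ha : 1 ≤ a) (hb : 1 ≤ b) :
    12 * ((a:ℤ) * (DDn a b) + (b:ℤ) * (DDn b a))
      = ((a:ℤ)-1)*((b:ℤ)-1)*(8*(a:ℤ)*(b:ℤ)-(a:ℤ)-(b:ℤ)-1) := by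
  -- Smax + Smin = Ssum in ℕ
  have h1 : (a * DDn a b + b * DDn b a)
      + (∑ i ∈ Finset.Icc 1 (b-1), ∑ j ∈ Finset.Icc 1 (a-1), min (a*i) (b*j))
      = ∑ i ∈ Finset.Icc 1 (b-1), ∑ j ∈ Finset.Icc 1 (a-1), (a*i + b*j) := by
    rw [maxsum h ha hb, ← Finset.sum_add_distrib]
    apply Finset.sum_congr rfl; intro i _
    rw [← Finset.sum_add_distrib]
    apply Finset.sum_congr rfl; intro j _
    exact max_add_min (a*i) (b*j)
  -- evaluate Ssum in ℤ
  have h2 : ((∑ i ∈ Finset.Icc 1 (b-1), ∑ j ∈ Finset.Icc 1 (a-1), (a*i + b*j) : ℕ) : ℤ)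
      = ((a:ℤ)-1)*((a:ℤ))*(∑ i ∈ Finset.Icc 1 (b-1), (i:ℤ))
        + ((b:ℤ)-1)*((b:ℤ))*(∑ j ∈ Finset.Icc 1 (a-1), (j:ℤ)) := by
    push_cast
    have inner : ∀ i ∈ Finset.Icc 1 (b-1), ∑ j ∈ Finset.Icc 1 (a-1), ((a:ℤ)*i + (b:ℤ)*j)
        = ((a:ℤ)-1)*((a:ℤ)*i) + (b:ℤ)*(∑ j ∈ Finset.Icc 1 (a-1), (j:ℤ)) := by
      intro i _
      rw [Finset.sum_add_distrib, Finset.sum_const, Nat.card_Icc, Nat.add_sub_cancel,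
        ← Finset.mul_sum, nsmul_eq_mul, Nat.cast_sub ha]
      push_cast
      ring
    rw [Finset.sum_congr rfl inner, Finset.sum_add_distrib, Finset.sum_const, Nat.card_Icc,
      Nat.add_sub_cancel, nsmul_eq_mul, Nat.cast_sub hb]
    simp only [← Finset.mul_sum]
    push_cast
    ring
  -- min sum in ℤ via usum_eval
  have h3 : 12 * ((a:ℤ)*b) *
      ((∑ i ∈ Finset.Icc 1 (b-1), ∑ j ∈ Finset.Icc 1 (a-1), min (a*i) (b*j) : ℕ) : ℤ)
      = (a:ℤ)*b*(((a:ℤ)-1)*((b:ℤ)-1)*(4*(a:ℤ)*b+(a:ℤ)+(b:ℤ)+1)) := by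
    rw [minsum ha hb]
    rw [show ((∑ u ∈ range (a*b), (b-1-u/a)*(a-1-u/b) : ℕ) : ℤ)
        = ∑ u ∈ range (a*b), ((b-1-u/a : ℕ) : ℤ) * ((a-1-u/b : ℕ):ℤ) by push_cast; rfl]
    exact usum_eval a b h ha hb
  -- cast h1
  have h1' := congrArg (Nat.cast : ℕ → ℤ) h1
  rw [Nat.cast_add, Nat.cast_add, Nat.cast_mul, Nat.cast_mul] at h1'
  have ga := gaussIcc (a-1)
  have gb := gaussIcc (b-1)
  rw [Nat.cast_sub ha] at ga
  rw [Nat.cast_sub hb] at gb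
  push_cast at ga gb
  have habne : ((a:ℤ)*b) ≠ 0 := by
    have : (0:ℤ) < (a:ℤ)*b := by positivity
    omega
  apply mul_left_cancel₀ habne
  linear_combination 12*((a:ℤ)*b)*h1' + 12*((a:ℤ)*b)*h2 - h3
    + (6*(a:ℤ)*b*((b:ℤ)-1)*(b:ℤ))*ga + (6*(a:ℤ)*b*((a:ℤ)-1)*(a:ℤ))*gb

lemma modRep_eq {a b x : ℕ} (h : Nat.Coprime a b) (hx1 : 1 ≤ x) (hx2 : x ≤ b-1) :
    modRep a b x = a*x % b := by
  rw [modRep, if_neg (mod_ne_zero h hx1 hx2)]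

lemma modRep_le {a b x : ℕ} (hb : 1 ≤ b) : modRep a b x ≤ b := by
  rw [modRep]
  split
  · exact le_refl b
  · exact le_of_lt (Nat.mod_lt _ (by omega))

lemma inv_as_sum {a b : ℕ} (h : Nat.Coprime a b) (hb : 1 ≤ b) :
    invNum a b = ∑ i ∈ Finset.Icc 1 (b-1), ∑ j ∈ Finset.Icc 1 (b-1),
      (if i < j ∧ a*j % b < a*i % b then 1 else 0) := by
  rw [invNum]
  have hset : (Finset.Icc 1 b ×ˢ Finset.Icc 1 b).filter
        (fun p => p.1 < p.2 ∧ modRep a b p.2 < modRep a b p.1)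
      = (Finset.Icc 1 (b-1) ×ˢ Finset.Icc 1 (b-1)).filter
        (fun p => p.1 < p.2 ∧ a*p.2 % b < a*p.1 % b) := by
    ext ⟨i,j⟩
    simp only [Finset.mem_filter, Finset.mem_product, Finset.mem_Icc]
    constructor
    · rintro ⟨⟨⟨hi1,hi2⟩,hj1,hj2⟩, hij, hm⟩
      have hjb : j ≠ b := by
        intro he
        subst he
        rw [show modRep a j j = j from by rw [modRep, if_pos (Nat.mul_mod_left a j)]] at hm
        exact absurd hm (not_lt.2 (modRep_le hb))
      have hj2' : j ≤ b - 1 := by omega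
      have hi2' : i ≤ b - 1 := by omega
      rw [modRep_eq h hj1 hj2', modRep_eq h hi1 hi2'] at hm
      exact ⟨⟨⟨hi1,hi2'⟩,hj1,hj2'⟩, hij, hm⟩
    · rintro ⟨⟨⟨hi1,hi2⟩,hj1,hj2⟩, hij, hm⟩
      rw [← modRep_eq h hj1 hj2, ← modRep_eq h hi1 hi2] at hm
      exact ⟨⟨⟨hi1, by omega⟩,hj1, by omega⟩, hij, hm⟩
  rw [hset, Finset.card_filter, Finset.sum_product]

lemma indicator_eq {a b i j : ℕ} (h : Nat.Coprime a b) (hi : 1 ≤ i) (hij : i < j)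
    (hj : j ≤ b-1) :
    (if a*j % b < a*i % b then (1:ℤ) else 0)
      = ((a*j/b : ℕ) : ℤ) - ((a*i/b : ℕ) : ℤ) - ((a*(j-i)/b : ℕ) : ℤ) := by
  have hb0 : 0 < b := by omega
  set d := j - i with hd
  have hdj : i + d = j := by omega
  have key : a*j = a*i + a*d := by rw [← hdj, Nat.mul_add]
  have h1 := Nat.div_add_mod (a*i) b
  have h2 := Nat.div_add_mod (a*d) b
  have hr1 : a*i % b ≠ 0 := mod_ne_zero h hi (by omega)
  have hr2 : a*d % b ≠ 0 := mod_ne_zero h (by omega) (by omega)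
  have hm1 : a*i % b < b := Nat.mod_lt _ hb0
  have hm2 : a*d % b < b := Nat.mod_lt _ hb0
  rcases lt_or_ge (a*i % b + a*d % b) b with hc | hc
  · have he : (a*i % b + a*d % b) + b*(a*i/b + a*d/b) = a*j := by
      rw [Nat.mul_add]; omega
    have hu := (Nat.div_mod_unique hb0).2 ⟨he, hc⟩
    rw [if_neg (by omega), hu.1]
    push_cast
    ring
  · have he : (a*i % b + a*d % b - b) + b*(a*i/b + a*d/b + 1) = a*j := by
      rw [Nat.mul_add, Nat.mul_add, Nat.mul_one]; omega
    have hu := (Nat.div_mod_unique hb0).2 ⟨he, by omega⟩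
    rw [if_pos (by omega), hu.1]
    push_cast
    ring

lemma sum_Icc_one (m : ℕ) (g : ℕ → ℤ) :
    ∑ i ∈ Finset.Icc 1 m, g i = ∑ k ∈ range m, g (k+1) := by
  induction m with
  | zero => simp
  | succ n ih => rw [Finset.sum_Icc_succ_top (by omega), ih, Finset.sum_range_succ]

lemma inv_eq {a b : ℕ} (h : Nat.Coprime a b) (hb : 1 ≤ b) :
    (invNum a b : ℤ) = 3 * (DDn a b : ℤ) - (2*(b:ℤ)-1) * (EEn a b : ℤ) := by
  have cast1 : (invNum a b : ℤ) = ∑ i ∈ Finset.Icc 1 (b-1), ∑ j ∈ Finset.Icc 1 (b-1),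
      (if i < j ∧ a*j % b < a*i % b then (1:ℤ) else 0) := by
    rw [inv_as_sum h hb]
    push_cast
    rfl
  have e : ∀ i ∈ Finset.Icc 1 (b-1), ∀ j ∈ Finset.Icc 1 (b-1),
      (if i < j ∧ a*j % b < a*i % b then (1:ℤ) else 0)
      = (if i < j then ((a*j/b:ℕ):ℤ) else 0) - (if i < j then ((a*i/b:ℕ):ℤ) else 0)
        - (if i < j then ((a*(j-i)/b:ℕ):ℤ) else 0) := by
    intro i hi j hj
    rw [Finset.mem_Icc] at hi hj
    by_cases hij : i < j
    · simp only [hij, true_and, if_true]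
      exact indicator_eq h hi.1 hij hj.2
    · simp [hij]
  have hfil : ∀ j, 1 ≤ j → j ≤ b-1 →
      (Finset.Icc 1 (b-1)).filter (fun i => i < j) = Finset.Icc 1 (j-1) := by
    intro j h1 h2
    ext x
    simp only [Finset.mem_filter, Finset.mem_Icc]
    omega
  have hSA : ∑ i ∈ Finset.Icc 1 (b-1), ∑ j ∈ Finset.Icc 1 (b-1),
        (if i < j then ((a*j/b:ℕ):ℤ) else 0)
      = ∑ j ∈ Finset.Icc 1 (b-1), ((j:ℤ)-1) * ((a*j/b:ℕ):ℤ) := by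
    rw [Finset.sum_comm]
    apply Finset.sum_congr rfl
    intro j hj
    rw [Finset.mem_Icc] at hj
    rw [← Finset.sum_filter, hfil j hj.1 hj.2, Finset.sum_const, Nat.card_Icc,
      Nat.add_sub_cancel, nsmul_eq_mul, Nat.cast_sub hj.1]
    norm_num
  have hSB : ∑ i ∈ Finset.Icc 1 (b-1), ∑ j ∈ Finset.Icc 1 (b-1),
        (if i < j then ((a*i/b:ℕ):ℤ) else 0)
      = ∑ i ∈ Finset.Icc 1 (b-1), ((b:ℤ)-1-(i:ℤ)) * ((a*i/b:ℕ):ℤ) := by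
    apply Finset.sum_congr rfl
    intro i hi
    rw [Finset.mem_Icc] at hi
    rw [← Finset.sum_filter]
    have hfil2 : (Finset.Icc 1 (b-1)).filter (fun j => i < j) = Finset.Icc (i+1) (b-1) := by
      ext x
      simp only [Finset.mem_filter, Finset.mem_Icc]
      omega
    rw [hfil2, Finset.sum_const, Nat.card_Icc, nsmul_eq_mul,
      show b-1+1-(i+1) = b-1-i from by omega, Nat.cast_sub (by omega), Nat.cast_sub hb]
    norm_num
  have hSC : ∑ i ∈ Finset.Icc 1 (b-1), ∑ j ∈ Finset.Icc 1 (b-1),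
        (if i < j then ((a*(j-i)/b:ℕ):ℤ) else 0)
      = ∑ i ∈ Finset.Icc 1 (b-1), ∑ j ∈ Finset.Icc 1 (b-1),
        (if i < j then ((a*i/b:ℕ):ℤ) else 0) := by
    rw [Finset.sum_comm]
    have inner : ∀ j ∈ Finset.Icc 1 (b-1),
        (∑ i ∈ Finset.Icc 1 (b-1), if i < j then ((a*(j-i)/b:ℕ):ℤ) else 0)
        = ∑ d ∈ Finset.Icc 1 (b-1), (if d < j then ((a*d/b:ℕ):ℤ) else 0) := by
      intro j hj
      rw [Finset.mem_Icc] at hj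
      rw [← Finset.sum_filter, ← Finset.sum_filter, hfil j hj.1 hj.2]
      rw [sum_Icc_one, sum_Icc_one]
      have hpt : ∀ k ∈ range (j-1), ((a*(j - (k+1))/b : ℕ):ℤ)
          = (fun k => ((a*(k+1)/b : ℕ):ℤ)) ((j-1) - 1 - k) := by
        intro k hk
        rw [Finset.mem_range] at hk
        simp only []
        rw [show j - 1 - 1 - k + 1 = j - (k+1) from by omega]
      rw [Finset.sum_congr rfl hpt]
      exact Finset.sum_range_reflect (fun k => ((a*(k+1)/b : ℕ):ℤ)) (j-1)
    rw [Finset.sum_congr rfl inner, Finset.sum_comm]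
  rw [cast1, Finset.sum_congr rfl (fun i hi => Finset.sum_congr rfl (fun j hj => e i hi j hj))]
  simp only [Finset.sum_sub_distrib]
  rw [hSA, hSB, hSC, hSB]
  have dd : (DDn a b : ℤ) = ∑ i ∈ Finset.Icc 1 (b-1), (i:ℤ) * ((a*i/b:ℕ):ℤ) := by
    rw [DDn]; push_cast; rfl
  have ee : (EEn a b : ℤ) = ∑ i ∈ Finset.Icc 1 (b-1), ((a*i/b:ℕ):ℤ) := by
    rw [EEn]; push_cast; rfl
  rw [dd, ee, Finset.mul_sum, Finset.mul_sum, ← Finset.sum_sub_distrib,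
    ← Finset.sum_sub_distrib, ← Finset.sum_sub_distrib]
  apply Finset.sum_congr rfl
  intro i _
  ring

lemma sqIcc (n : ℕ) : (∑ i ∈ Finset.Icc 1 n, (i:ℤ)^2) * 6 = n*(n+1)*(2*n+1) := by
  induction n with
  | zero => simp
  | succ m ih =>
      rw [Finset.sum_Icc_succ_top (by omega)]
      push_cast
      push_cast at ih
      nlinarith [ih]

lemma refl_div {a b i : ℕ} (h : Nat.Coprime a b) (ha : 1 ≤ a) (hi1 : 1 ≤ i) (hi2 : i ≤ b-1) :
    a*i/b + a*(b-i)/b = a - 1 := by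
  have hb0 : 0 < b := by omega
  set q := a*i/b with hq
  set r := a*i % b with hr
  have h1 : b * q + r = a*i := Nat.div_add_mod (a*i) b
  have hrne : r ≠ 0 := mod_ne_zero h hi1 hi2
  have hm : r < b := Nat.mod_lt _ hb0
  have hqle : q ≤ a-1 := div_le' ha (by omega) hi2
  have hab : a*(b-i) + a*i = a*b := by rw [← Nat.mul_add]; congr 1; omega
  have hx : b*(a - q - 1) + b*q + b*1 = b*a := by
    rw [← Nat.mul_add, ← Nat.mul_add]; congr 1; omega
  rw [Nat.mul_one] at hx
  have hx' : b*a = a*b := Nat.mul_comm b a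
  have he : (b - r) + b*(a - q - 1) = a*(b-i) := by omega
  have hu := (Nat.div_mod_unique hb0).2 ⟨he, by omega⟩
  rw [hu.1]
  omega

lemma two_div {a b i : ℕ} (h : Nat.Coprime a b) (ha : 1 ≤ a) (hab : a ≤ b-1)
    (hi1 : 1 ≤ i) (hi2 : i ≤ b-1) :
    a*i/b + (b-a)*i/b = i - 1 := by
  have hb0 : 0 < b := by omega
  set q := a*i/b with hq
  set r := a*i % b with hr
  have h1 : b * q + r = a*i := Nat.div_add_mod (a*i) b
  have hrne : r ≠ 0 := mod_ne_zero h hi1 hi2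
  have hm : r < b := Nat.mod_lt _ hb0
  have hqlt : q < i := by
    have hlt : a*i < i*b := by
      have : a < b := by omega
      calc a*i = i*a := Nat.mul_comm a i
      _ < i*b := Nat.mul_lt_mul_of_pos_left this (by omega)
    exact (Nat.div_lt_iff_lt_mul hb0).2 hlt
  have hsub : (b-a)*i + a*i = b*i := by rw [← Nat.add_mul]; congr 1; omega
  have hx : b*(i - q - 1) + b*q + b*1 = b*i := by
    rw [← Nat.mul_add, ← Nat.mul_add]; congr 1; omega
  rw [Nat.mul_one] at hx
  have he : (b - r) + b*(i - q - 1) = (b-a)*i := by omega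
  have hu := (Nat.div_mod_unique hb0).2 ⟨he, by omega⟩
  rw [hu.1]
  omega

lemma reflect_sum {b : ℕ} (hb : 1 ≤ b) (f : ℕ → ℤ) :
    ∑ i ∈ Finset.Icc 1 (b-1), f (b-i) = ∑ i ∈ Finset.Icc 1 (b-1), f i := by
  rw [sum_Icc_one, sum_Icc_one]
  have hpt : ∀ k ∈ range (b-1), f (b - (k+1)) = (fun k => f (k+1)) ((b-1) - 1 - k) := by
    intro k hk
    rw [Finset.mem_range] at hk
    simp only []
    rw [show b - 1 - 1 - k + 1 = b - (k+1) from by omega]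
  rw [Finset.sum_congr rfl hpt]
  exact Finset.sum_range_reflect (fun k => f (k+1)) (b-1)

lemma EEval {a b : ℕ} (h : Nat.Coprime a b) (ha : 1 ≤ a) (hb : 1 ≤ b) :
    2 * (EEn a b : ℤ) = ((a:ℤ)-1)*((b:ℤ)-1) := by
  have ee : (EEn a b : ℤ) = ∑ i ∈ Finset.Icc 1 (b-1), ((a*i/b : ℕ):ℤ) := by
    rw [EEn]; push_cast; rfl
  have hrefl := reflect_sum hb (fun x => ((a*x/b : ℕ):ℤ))
  have comb : ∑ i ∈ Finset.Icc 1 (b-1),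
      (((a*i/b : ℕ):ℤ) + ((a*(b-i)/b : ℕ):ℤ)) = ∑ i ∈ Finset.Icc 1 (b-1), ((a:ℤ)-1) := by
    apply Finset.sum_congr rfl
    intro i hi
    rw [Finset.mem_Icc] at hi
    have := refl_div h ha hi.1 hi.2
    have hcast := congrArg (Nat.cast : ℕ → ℤ) this
    rw [Nat.cast_add, Nat.cast_sub ha, Nat.cast_one] at hcast
    linarith
  rw [Finset.sum_add_distrib, hrefl] at comb
  rw [Finset.sum_const, Nat.card_Icc, Nat.add_sub_cancel, nsmul_eq_mul, Nat.cast_sub hb,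
    Nat.cast_one] at comb
  rw [ee]
  linarith

lemma recip {a b : ℕ} (h : Nat.Coprime a b) (ha : 1 ≤ a) (hb : 1 ≤ b) :
    4*((a:ℤ) * (invNum a b) + (b:ℤ) * (invNum b a))
      = ((a:ℤ)-1)*((b:ℤ)-1)*((a:ℤ)+(b:ℤ)-1) := by
  rw [inv_eq h hb, inv_eq h.symm ha]
  have k := key h ha hb
  have e1 := EEval h ha hb
  have e2 := EEval h.symm hb ha
  linear_combination k - 2*(a:ℤ)*(2*(b:ℤ)-1)*e1 - 2*(b:ℤ)*(2*(a:ℤ)-1)*e2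

lemma filter_lt_Icc (m j : ℕ) (hj : 1 ≤ j) :
    (Finset.Icc 1 m).filter (fun i => i < j) = Finset.Icc 1 (min (j-1) m) := by
  ext x
  simp only [Finset.mem_filter, Finset.mem_Icc]
  omega

lemma sym {a b : ℕ} (h : Nat.Coprime a b) (ha : 1 ≤ a) (hab : a ≤ b-1) (hb : 2 ≤ b) :
    2 * ((invNum a b : ℤ) + (invNum (b-a) b : ℤ)) = ((b:ℤ)-1)*((b:ℤ)-2) := by
  have h' : Nat.Coprime (b-a) b := (Nat.coprime_self_sub_left (by omega)).2 h
  rw [inv_eq h (by omega), inv_eq h' (by omega)]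
  have dd1 : (DDn a b : ℤ) = ∑ i ∈ Finset.Icc 1 (b-1), (i:ℤ) * ((a*i/b:ℕ):ℤ) := by
    rw [DDn]; push_cast; rfl
  have dd2 : (DDn (b-a) b : ℤ) = ∑ i ∈ Finset.Icc 1 (b-1), (i:ℤ) * (((b-a)*i/b:ℕ):ℤ) := by
    rw [DDn]; push_cast; rfl
  have ee1 : (EEn a b : ℤ) = ∑ i ∈ Finset.Icc 1 (b-1), ((a*i/b:ℕ):ℤ) := by
    rw [EEn]; push_cast; rfl
  have ee2 : (EEn (b-a) b : ℤ) = ∑ i ∈ Finset.Icc 1 (b-1), (((b-a)*i/b:ℕ):ℤ) := by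
    rw [EEn]; push_cast; rfl
  have pt : ∀ i ∈ Finset.Icc 1 (b-1),
      ((a*i/b:ℕ):ℤ) + (((b-a)*i/b:ℕ):ℤ) = (i:ℤ) - 1 := by
    intro i hi
    rw [Finset.mem_Icc] at hi
    have := two_div h ha hab hi.1 hi.2
    have hcast := congrArg (Nat.cast : ℕ → ℤ) this
    rw [Nat.cast_add, Nat.cast_sub hi.1, Nat.cast_one] at hcast
    linarith
  have hD : (DDn a b : ℤ) + (DDn (b-a) b : ℤ)
      = (∑ i ∈ Finset.Icc 1 (b-1), (i:ℤ)^2) - (∑ i ∈ Finset.Icc 1 (b-1), (i:ℤ)) := by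
    rw [dd1, dd2, ← Finset.sum_add_distrib, ← Finset.sum_sub_distrib]
    apply Finset.sum_congr rfl
    intro i hi
    have := pt i hi
    nlinarith [this]
  have hE : (EEn a b : ℤ) + (EEn (b-a) b : ℤ)
      = (∑ i ∈ Finset.Icc 1 (b-1), (i:ℤ)) - ((b:ℤ)-1) := by
    rw [ee1, ee2, ← Finset.sum_add_distrib]
    have : ∑ i ∈ Finset.Icc 1 (b-1), (((a*i/b:ℕ):ℤ) + (((b-a)*i/b:ℕ):ℤ))
        = ∑ i ∈ Finset.Icc 1 (b-1), ((i:ℤ) - 1) := Finset.sum_congr rfl pt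
    rw [this, Finset.sum_sub_distrib, Finset.sum_const, Nat.card_Icc, Nat.add_sub_cancel,
      nsmul_eq_mul, Nat.cast_sub (by omega : 1 ≤ b), Nat.cast_one, mul_one]
  have g1 := gaussIcc (b-1)
  have g2 := sqIcc (b-1)
  rw [Nat.cast_sub (by omega : 1 ≤ b)] at g1 g2
  push_cast at g1 g2
  linear_combination 6*hD - 2*(2*(b:ℤ)-1)*hE + g2 - (2*(b:ℤ)+2)*g1

lemma triv {a b : ℕ} (ha : 1 ≤ a) (hb : 1 ≤ b) :
    2 * (invNum b a : ℤ) ≤ ((a:ℤ)-1)*((a:ℤ)-2) := by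
  have hsub : ((Finset.Icc 1 a ×ˢ Finset.Icc 1 a).filter
        (fun p => p.1 < p.2 ∧ modRep b a p.2 < modRep b a p.1))
      ⊆ ((Finset.Icc 1 (a-1) ×ˢ Finset.Icc 1 (a-1)).filter (fun p => p.1 < p.2)) := by
    rintro ⟨i,j⟩ hp
    simp only [Finset.mem_filter, Finset.mem_product, Finset.mem_Icc] at hp ⊢
    obtain ⟨⟨⟨hi1,hi2⟩,hj1,hj2⟩, hij, hm⟩ := hp
    have hja : j ≠ a := by
      intro he
      subst he
      rw [show modRep b j j = j from by rw [modRep, if_pos (Nat.mul_mod_left b j)]] at hm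
      exact absurd hm (not_lt.2 (modRep_le ha))
    exact ⟨⟨⟨hi1, by omega⟩, hj1, by omega⟩, hij⟩
  have hcard := Finset.card_le_card hsub
  have hc2 : ((((Finset.Icc 1 (a-1) ×ˢ Finset.Icc 1 (a-1)).filter
        (fun p => p.1 < p.2)).card) : ℤ)
      = ∑ j ∈ Finset.Icc 1 (a-1), ((j:ℤ) - 1) := by
    rw [Finset.card_filter, Finset.sum_product]
    push_cast
    rw [Finset.sum_comm]
    apply Finset.sum_congr rfl
    intro j hj
    rw [Finset.mem_Icc] at hj
    rw [← Finset.sum_filter, filter_lt_Icc (a-1) j hj.1,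
      show min (j-1) (a-1) = j-1 from by omega, Finset.sum_const, Nat.card_Icc,
      Nat.add_sub_cancel, nsmul_eq_mul, Nat.cast_sub hj.1, Nat.cast_one, mul_one]
  have hsum : ∑ j ∈ Finset.Icc 1 (a-1), ((j:ℤ) - 1)
      = (∑ j ∈ Finset.Icc 1 (a-1), (j:ℤ)) - ((a:ℤ)-1) := by
    rw [Finset.sum_sub_distrib, Finset.sum_const, Nat.card_Icc, Nat.add_sub_cancel,
      nsmul_eq_mul, Nat.cast_sub ha, Nat.cast_one, mul_one]
  have g1 := gaussIcc (a-1)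
  rw [Nat.cast_sub ha] at g1
  push_cast at g1
  have hcast : (invNum b a : ℤ) ≤ ((((Finset.Icc 1 (a-1) ×ˢ Finset.Icc 1 (a-1)).filter
      (fun p => p.1 < p.2)).card) : ℤ) := by
    rw [invNum]
    exact_mod_cast hcard
  rw [hc2, hsum] at hcast
  linarith

lemma direct {a b : ℕ} (h : Nat.Coprime a b) (ha : 2 ≤ a) (hba : 2*a < b) :
    (b:ℤ)^2 - 1 ≤ 8 * (invNum a b : ℤ)
      ∧ 8 * (invNum a b : ℤ) ≤ 3*(b:ℤ)^2 - 12*(b:ℤ) + 9 := by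
  have r := recip h (by omega) (by omega)
  have t := triv (a := a) (b := b) (by omega) (by omega)
  have nn : (0:ℤ) ≤ (invNum b a : ℤ) := by positivity
  have ha' : (2:ℤ) ≤ (a:ℤ) := by exact_mod_cast ha
  have hb' : 2*(a:ℤ) < (b:ℤ) := by exact_mod_cast hba
  have ha0 : (0:ℤ) < (a:ℤ) := by linarith
  have t4 : 4*(b:ℤ)*(2 * (invNum b a : ℤ)) ≤ 4*(b:ℤ)*(((a:ℤ)-1)*((a:ℤ)-2)) :=
    mul_le_mul_of_nonneg_left t (by positivity)
  have binv : (0:ℤ) ≤ 8*(b:ℤ)*(invNum b a : ℤ) := by positivity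
  constructor
  · have hP : (0:ℤ) ≤ ((b:ℤ)+1)*(((a:ℤ)-2)*((b:ℤ)-2*(a:ℤ)+1)) := by
      apply mul_nonneg (by linarith)
      apply mul_nonneg (by linarith) (by linarith)
    have key1 : (a:ℤ)*((b:ℤ)^2-1) ≤ (a:ℤ)*(8 * (invNum a b : ℤ)) := by nlinarith [r, t4, hP]
    exact le_of_mul_le_mul_left key1 ha0
  · have hQ : (0:ℤ) ≤ ((b:ℤ)-1)*(((a:ℤ)+2)*((b:ℤ)-2*(a:ℤ)-1)) := by
      apply mul_nonneg (by linarith)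
      apply mul_nonneg (by linarith) (by linarith)
    have key2 : (a:ℤ)*(8 * (invNum a b : ℤ)) ≤ (a:ℤ)*(3*(b:ℤ)^2 - 12*(b:ℤ) + 9) := by
      nlinarith [r, binv, hQ]
    exact le_of_mul_le_mul_left key2 ha0

theorem stmt10 (a b : ℕ) (hb : 5 ≤ b) (ha2 : 2 ≤ a) (hab : a ≤ b - 2)
    (h : Nat.Coprime a b) :
    ((b : ℚ) ^ 2 - 1) / 8 ≤ (invNum a b : ℚ) ∧
      (invNum a b : ℚ) ≤ (3 * (b : ℚ) ^ 2 - 12 * b + 9) / 8 := by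
  have main : (b:ℤ)^2 - 1 ≤ 8 * (invNum a b : ℤ)
      ∧ 8 * (invNum a b : ℤ) ≤ 3*(b:ℤ)^2 - 12*(b:ℤ) + 9 := by
    have hne : 2*a ≠ b := by
      intro he
      have hdvd : a ∣ b := ⟨2, by omega⟩
      have h2 : a ∣ 1 := by
        rw [← h.gcd_eq_one]
        exact Nat.dvd_gcd dvd_rfl hdvd
      have := Nat.dvd_one.mp h2
      omega
    rcases lt_or_gt_of_ne hne with hba | hba
    · exact direct h ha2 hba
    · have hc2 : 2 ≤ b - a := by omega
      have hcb : 2*(b-a) < b := by omega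
      have hco : Nat.Coprime (b-a) b := (Nat.coprime_self_sub_left (by omega)).2 h
      have hd := direct hco hc2 hcb
      have hs := sym hco (by omega) (by omega) (by omega)
      rw [show b - (b-a) = a from by omega] at hs
      have hbz : (5:ℤ) ≤ (b:ℤ) := by exact_mod_cast hb
      constructor
      · nlinarith [hd.2, hs]
      · nlinarith [hd.1, hs]
  obtain ⟨L, U⟩ := main
  constructor
  · rw [div_le_iff₀ (by norm_num : (0:ℚ) < 8)]
    have : ((b:ℚ)^2 - 1) ≤ ((8 * (invNum a b : ℤ) : ℤ) : ℚ) := by exact_mod_cast L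
    push_cast at this ⊢
    linarith
  · rw [le_div_iff₀ (by norm_num : (0:ℚ) < 8)]
    have : (((8 * (invNum a b : ℤ) : ℤ) : ℚ)) ≤ 3*(b:ℚ)^2 - 12*(b:ℚ) + 9 := by exact_mod_cast U
    push_cast at this ⊢
    linarith
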